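/- arXiv:2601.03749 — 2 statements merged into one kernel-verified Lean document; each statement's English description precedes it below -/
import Mathlib

section
/- Let x = ⟨x_β : β < α⟩ be a complete run of the diagonal game G_Δ. Then exactly one of the following holds: (1) for some k < ω, η_k^x = η_{k+1}^x = α; or (2) for all k < ω, η_k^x < η_{k+1}^x, and α = sup{η_k^x : k < ω}. -/
noncomputable section

/-- A real is an element of the Baire space ℕ^ℕ. -/
abbrev Real' : Type := ℕ → ℕ

/-- The binary relation on ℕ coded by a real: `m R_x n` iff `x ⟨m,n⟩ = 0`. -/
def woRel (x : Real') : ℕ → ℕ → Prop := fun m n => x (Nat.pair m n) = 0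

/-- `‖x‖_WO`: the order type of the coded relation if it is a well-order of ℕ,
and `0` otherwise. -/
noncomputable def woNorm (x : Real') : Ordinal :=
  @dite Ordinal (IsWellOrder ℕ (woRel x)) (Classical.dec _)
    (fun h => @Ordinal.type ℕ (woRel x) h) (fun _ => 0)

/-- The ordinals `η_k^x` for the sequence of reals `⟨x_β : β < α⟩` (values of `x` at
ordinals `≥ α` are irrelevant): `η_0 = 0`, `η_1 = 1`, and for `k ≥ 1`,
`η_{k+1} = sup {1 + ‖x_β‖_WO : β < min (η_k, α)}`. -/
noncomputable def eta (α : Ordinal) (x : Ordinal → Real') : ℕ → Ordinal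
  | 0 => 0
  | 1 => 1
  | (k + 2) => sSup {v : Ordinal | ∃ β < min (eta α x (k + 1)) α, v = 1 + woNorm (x β)}

/-- The length condition of the diagonal game holds at `α` for the sequence `x`:
`ω·α = sup {ω·(1 + ‖x_β‖_WO) : β < α}`. -/
def stopsAt (x : Ordinal → Real') (α : Ordinal) : Prop :=
  Ordinal.omega0 * α =
    sSup {v : Ordinal | ∃ β < α, v = Ordinal.omega0 * (1 + woNorm (x β))}

/-- `⟨x_β : β < α⟩` is a complete run of the diagonal game `G_Δ`: `α > 0` is the least
nonzero ordinal at which the length condition is met. -/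
def IsCompleteRun (x : Ordinal → Real') (α : Ordinal) : Prop :=
  0 < α ∧ stopsAt x α ∧ ∀ α' : Ordinal, 0 < α' → α' < α → ¬ stopsAt x α'

/-- For every complete run `⟨x_β : β < α⟩` of `G_Δ`, exactly one of the following holds:
(1) for some `k < ω`, `η_k^x = η_{k+1}^x = α`; or (2) for all `k < ω`,
`η_k^x < η_{k+1}^x`, and `α = sup {η_k^x : k < ω}`. -/
theorem stmt3 (α : Ordinal) (x : Ordinal → Real') (h : IsCompleteRun x α) :
    Xor'
      (∃ k : ℕ, eta α x k = eta α x (k + 1) ∧ eta α x (k + 1) = α)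
      ((∀ k : ℕ, eta α x k < eta α x (k + 1)) ∧ α = ⨆ k : ℕ, eta α x k) := by
  classical
  obtain ⟨hα0, hstop, hmin⟩ := h
  set f : Ordinal → Ordinal := fun β => 1 + woNorm (x β) with hfdef
  have hω : (0:Ordinal) < Ordinal.omega0 := Ordinal.omega0_pos
  have hnorm := Ordinal.isNormal_mul_right hω
  have hset : ∀ δ : Ordinal, {v : Ordinal | ∃ β < δ, v = f β} = f '' Set.Iio δ := by
    intro δ; ext v
    simp only [Set.mem_setOf_eq, Set.mem_image, Set.mem_Iio]
    constructor
    · rintro ⟨β, hβ, rfl⟩; exact ⟨β, hβ, rfl⟩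
    · rintro ⟨β, hβ, rfl⟩; exact ⟨β, hβ, rfl⟩
  have hsetω : ∀ δ : Ordinal,
      {v : Ordinal | ∃ β < δ, v = Ordinal.omega0 * (1 + woNorm (x β))}
        = (fun t => Ordinal.omega0 * t) '' (f '' Set.Iio δ) := by
    intro δ; ext v
    simp only [Set.mem_setOf_eq, Set.mem_image, Set.mem_Iio]
    constructor
    · rintro ⟨β, hβ, rfl⟩; exact ⟨f β, ⟨β, hβ, rfl⟩, rfl⟩
    · rintro ⟨t, ⟨β, hβ, rfl⟩, rfl⟩; exact ⟨β, hβ, rfl⟩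
  have hbdd : ∀ δ : Ordinal, BddAbove (f '' Set.Iio δ) := by
    intro δ
    have := small_image f (Set.Iio δ)
    exact Ordinal.bddAbove_of_small
  have hbddω : ∀ δ : Ordinal,
      BddAbove ((fun t => Ordinal.omega0 * t) '' (f '' Set.Iio δ)) := fun δ =>
    Ordinal.bddAbove_image (hbdd δ) _
  have heta2 : ∀ k : ℕ, eta α x (k + 2) = sSup (f '' Set.Iio (min (eta α x (k+1)) α)) := by
    intro k; rw [eta, hset]
  have hf1 : ∀ β, 1 ≤ f β := fun β => le_self_add
  have hfle : ∀ β, β < α → f β ≤ α := by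
    intro β hβ
    have hmem : Ordinal.omega0 * f β ∈
        (fun t => Ordinal.omega0 * t) '' (f '' Set.Iio α) :=
      ⟨f β, ⟨β, hβ, rfl⟩, rfl⟩
    have := le_csSup (hbddω α) hmem
    rw [← hsetω, ← hstop] at this
    exact hnorm.strictMono.le_iff_le.1 this
  have h1α : (1:Ordinal) ≤ α := Order.one_le_iff_pos.2 hα0
  -- auxiliary monotonicity facts, proved jointly
  have haux : ∀ k : ℕ, 1 ≤ eta α x (k+1) ∧ eta α x (k+1) ≤ eta α x (k+2) := by
    intro k
    induction k with
    | zero =>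
      constructor
      · exact le_rfl
      · rw [heta2 0]
        have hmem : f 0 ∈ f '' Set.Iio (min (eta α x 1) α) := by
          refine ⟨0, ?_, rfl⟩
          simp only [Set.mem_Iio, lt_min_iff]
          exact ⟨one_pos, hα0⟩
        exact le_trans (hf1 0) (le_csSup (hbdd _) hmem)
    | succ k ih =>
      obtain ⟨ih1, ihle⟩ := ih
      have h1' : 1 ≤ eta α x (k+2) := le_trans ih1 ihle
      refine ⟨h1', ?_⟩
      rw [heta2 k, heta2 (k+1)]
      refine csSup_le_csSup (hbdd _) ?_ (Set.image_mono (Set.Iio_subset_Iio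
        (min_le_min ihle le_rfl)))
      refine Set.Nonempty.image _ ⟨0, ?_⟩
      simp only [Set.mem_Iio, lt_min_iff]
      exact ⟨lt_of_lt_of_le one_pos ih1, hα0⟩
  have hmono : ∀ k, eta α x k ≤ eta α x (k+1) := by
    intro k
    cases k with
    | zero => exact zero_le_one
    | succ k => exact (haux k).2
  have h1le : ∀ k : ℕ, 1 ≤ eta α x (k+1) := fun k => (haux k).1
  have hlea : ∀ k, eta α x k ≤ α := by
    intro k
    match k with
    | 0 => exact le_of_lt hα0
    | 1 => exact h1α
    | (k+2) =>
      rw [heta2 k]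
      refine csSup_le' ?_
      rintro v ⟨β, hβ, rfl⟩
      exact hfle β (lt_of_lt_of_le hβ (min_le_right _ _))
  -- key: if 0 < δ then ω * sSup (f '' Iio δ) = sSup (ω * ·) '' ...
  have hmul : ∀ δ : Ordinal, 0 < δ →
      Ordinal.omega0 * sSup (f '' Set.Iio δ)
        = sSup ((fun t => Ordinal.omega0 * t) '' (f '' Set.Iio δ)) := by
    intro δ hδ
    exact hnorm.map_sSup (Set.Nonempty.image _ ⟨0, hδ⟩) (hbdd δ)
  by_cases hstab : ∃ k : ℕ, eta α x (k+1) = eta α x (k+2)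
  · -- stabilizes: case (1)
    obtain ⟨k, hk⟩ := hstab
    have hγα : eta α x (k+1) = α := by
      by_contra hne
      have hlt : eta α x (k+1) < α := lt_of_le_of_ne (hlea (k+1)) hne
      have hminγ : min (eta α x (k+1)) α = eta α x (k+1) := min_eq_left (le_of_lt hlt)
      have hpos : 0 < eta α x (k+1) := lt_of_lt_of_le one_pos (h1le k)
      have hsup : sSup (f '' Set.Iio (eta α x (k+1))) = eta α x (k+1) := by
        conv_rhs => rw [hk, heta2 k, hminγ]
      have : stopsAt x (eta α x (k+1)) := by
        unfold stopsAt
        rw [hsetω, ← hsup, hmul _ hpos, hsup]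
      exact hmin _ hpos hlt this
    refine Or.inl ⟨⟨k+1, ?_, ?_⟩, ?_⟩
    · rw [hγα, ← hk, hγα]
    · rw [← hk, hγα]
    · rintro ⟨hstrict, -⟩
      exact absurd hk (ne_of_lt (hstrict (k+1)))
  · -- never stabilizes: case (2)
    push_neg at hstab
    have hstrict : ∀ k : ℕ, eta α x k < eta α x (k+1) := by
      intro k
      cases k with
      | zero => exact one_pos
      | succ k => exact lt_of_le_of_ne (hmono (k+1)) (hstab k)
    set lam : Ordinal := ⨆ k : ℕ, eta α x k with hlam
    have hlamle : lam ≤ α := Ordinal.iSup_le hlea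
    have hetalelam : ∀ k, eta α x k ≤ lam := fun k => Ordinal.le_iSup (eta α x) k
    have hlampos : 0 < lam := lt_of_lt_of_le one_pos (le_trans (h1le 0) (hetalelam 1))
    have hstoplam : stopsAt x lam := by
      unfold stopsAt
      rw [hsetω]
      have hmuliSup : Ordinal.omega0 * lam = ⨆ k : ℕ, Ordinal.omega0 * eta α x k := by
        rw [hlam]
        exact hnorm.map_iSup (Ordinal.bddAbove_range (eta α x))
      apply le_antisymm
      · rw [hmuliSup]
        refine Ordinal.iSup_le ?_
        intro k
        have h1 : Ordinal.omega0 * eta α x k ≤ Ordinal.omega0 * eta α x (k+2) :=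
          hnorm.strictMono.le_iff_le.2 (le_trans (hmono k) (hmono (k+1)))
        refine le_trans h1 ?_
        have hpos : 0 < min (eta α x (k+1)) α := lt_min (lt_of_lt_of_le one_pos (h1le k)) hα0
        rw [heta2 k, hmul _ hpos]
        refine csSup_le_csSup (hbddω lam) ?_ ?_
        · exact Set.Nonempty.image _ (Set.Nonempty.image _ ⟨0, hpos⟩)
        · refine Set.image_mono (Set.image_mono (Set.Iio_subset_Iio ?_))
          exact le_trans (min_le_left _ _) (hetalelam (k+1))
      · refine csSup_le' ?_
        rintro v ⟨t, ⟨β, hβ, rfl⟩, rfl⟩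
        simp only [Set.mem_Iio] at hβ
        obtain ⟨k, hk⟩ := Ordinal.lt_iSup_iff.1 (hβ.trans_le le_rfl : β < lam)
        have hβmin : β < min (eta α x (k+1)) α :=
          lt_min (lt_of_lt_of_le hk (hmono k)) (lt_of_lt_of_le hβ hlamle)
        have hfβ : f β ≤ eta α x (k+2) := by
          rw [heta2 k]
          exact le_csSup (hbdd _) ⟨β, hβmin, rfl⟩
        have : f β ≤ lam := le_trans hfβ (hetalelam (k+2))
        exact hnorm.strictMono.le_iff_le.2 this
    have hlameq : lam = α := by
      by_contra hne
      exact hmin lam hlampos (lt_of_le_of_ne hlamle hne) hstoplam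
    refine Or.inr ⟨⟨hstrict, hlameq.symm⟩, ?_⟩
    rintro ⟨k, hk, -⟩
    exact absurd hk (ne_of_lt (hstrict k))
end
end

section
/- Let α be an ordinal with 1 ≤ α < ω₁. Then the α-Solovay filter ℱ_α is a proper filter on [℘_{ω₁}(ℝ)]^{ω^α}: (i) the full set [℘_{ω₁}(ℝ)]^{ω^α} belongs to ℱ_α; (ii) ∅ ∉ ℱ_α; (iii) if Z ∈ ℱ_α and Z ⊆ Z' ⊆ [℘_{ω₁}(ℝ)]^{ω^α}, then Z' ∈ ℱ_α; and (iv) if Z₁, Z₂ ∈ ℱ_α, then Z₁ ∩ Z₂ ∈ ℱ_α. -/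
noncomputable section

/-- An ordinal is even iff it is of the form `λ + 2n` with `λ` zero or a limit
ordinal and `n < ω`; it is odd otherwise. -/
def OrdEven (ξ : Ordinal) : Prop :=
  ∃ lamb : Ordinal, ∃ n : ℕ, (lamb = 0 ∨ Order.IsSuccLimit lamb) ∧ ξ = lamb + 2 * n

/-- Sequences indexed by the ordinals below `ω^α`, with values sets of reals. -/
abbrev OrdSeq (α : Ordinal) : Type _ := Set.Iio (Ordinal.omega0 ^ α) → Set Real'

/-- `[℘_{ω₁}(ℝ)]^{ω^α}`: the `ω^α`-sequences all of whose values are countable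
sets of reals. -/
def FullSeqSet (α : Ordinal) : Set (OrdSeq α) := {f | ∀ η, (f η).Countable}

/-- A strategy for Player II: a function assigning a real to each position
`⟨x_ζ : ζ < ξ⟩` (used only at odd `ξ < ω^{1+α}`). -/
abbrev StratII : Type _ := (ξ : Ordinal) → ((Set.Iio ξ) → Real') → Real'

/-- The run `⟨p ξ : ξ < ω^{1+α}⟩` follows the strategy `F` of Player II:
at every odd `ξ < ω^{1+α}`, `p ξ` is the value of `F` at the current position. -/
def Follows (α : Ordinal) (F : StratII) (p : Ordinal → Real') : Prop :=
  ∀ ξ : Ordinal, ξ < Ordinal.omega0 ^ (1 + α) → ¬ OrdEven ξ →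
    p ξ = F ξ (fun ζ => p ζ.1)

/-- The sequence `⟨σ_η : η < ω^α⟩` produced by a run of the `α`-Solovay game, where
`σ_η = {x_ξ : ξ < ω·(1+η)}`. -/
def runSeq (α : Ordinal) (p : Ordinal → Real') : OrdSeq α :=
  fun η => {y | ∃ ξ < Ordinal.omega0 * (1 + η.1), y = p ξ}

/-- `F` is a winning strategy for Player II in the `α`-Solovay game `G^Sol_α(Z)`:
every run following `F` produces a sequence in `Z`. -/
def WinningII (α : Ordinal) (Z : Set (OrdSeq α)) (F : StratII) : Prop :=
  ∀ p : Ordinal → Real', Follows α F p → runSeq α p ∈ Z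

/-- The `α`-Solovay filter `ℱ_α`: all `Z ⊆ [℘_{ω₁}(ℝ)]^{ω^α}` such that Player II
has a winning strategy in `G^Sol_α(Z)`. -/
def SolovayFilter (α : Ordinal) : Set (Set (OrdSeq α)) :=
  {Z | Z ⊆ FullSeqSet α ∧ ∃ F : StratII, WinningII α Z F}


section Aux

open Ordinal Cardinal

lemma lt_omega1_iff' {o : Ordinal} : o < ω₁ ↔ o.card < ℵ₁ := by
  rw [← ord_aleph, Cardinal.lt_ord]

lemma add_lt_omega1' {a b : Ordinal} (ha : a < ω₁) (hb : b < ω₁) : a + b < ω₁ := by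
  rw [lt_omega1_iff'] at *
  rw [Ordinal.card_add]
  exact Cardinal.add_lt_of_lt aleph0_lt_aleph_one.le ha hb

lemma mul_lt_omega1' {a b : Ordinal} (ha : a < ω₁) (hb : b < ω₁) : a * b < ω₁ := by
  rw [lt_omega1_iff'] at *
  rw [Ordinal.card_mul]
  exact Cardinal.mul_lt_of_lt aleph0_lt_aleph_one.le ha hb

lemma opow_lt_omega1' : ∀ {a : Ordinal}, a < ω₁ → ω ^ a < ω₁ := by
  intro a
  induction a using Ordinal.limitRecOn with
  | zero => intro _; simpa using (one_lt_omega0.trans omega0_lt_omega_one)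
  | add_one o IH =>
    intro h
    rw [opow_add_one]
    exact mul_lt_omega1' (IH ((Order.lt_succ o).trans h)) omega0_lt_omega_one
  | limit o ho IH =>
    intro h
    rw [opow_limit omega0_ne_zero ho, show (⨆ x : Set.Iio o, ω ^ x.1) = bsup o (fun a _ => ω ^ a) from
      Ordinal.iSup_Iio_eq_bsup (o := o) (f := fun a _ => ω ^ a), ← ord_aleph]
    refine Cardinal.bsup_lt_ord_of_isRegular isRegular_aleph_one ?_ ?_
    · exact lt_omega1_iff'.mp h
    · intro i hi
      rw [ord_aleph]
      exact IH i hi (hi.trans h)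

lemma countable_Iio' {β : Ordinal} (h : β < ω₁) : (Set.Iio β).Countable := by
  rw [Cardinal.countable_iff_lt_aleph_one, Ordinal.mk_Iio_ordinal]
  have hc : β.card < ℵ₁ := lt_omega1_iff'.mp h
  have := Cardinal.lift_lt.mpr hc
  simpa using this

/-- The finite part of `ξ` in its decomposition `ξ = ω·(ξ/ω) + n`. -/
noncomputable def natPart (ξ : Ordinal) : ℕ :=
  Classical.choose (Ordinal.lt_omega0.mp (Ordinal.mod_lt ξ omega0_ne_zero))

lemma natPart_spec (ξ : Ordinal) : (natPart ξ : Ordinal) = ξ % ω :=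
  (Classical.choose_spec (Ordinal.lt_omega0.mp (Ordinal.mod_lt ξ omega0_ne_zero))).symm

lemma natPart_decomp (ξ : Ordinal) : ξ = ω * (ξ / ω) + natPart ξ := by
  rw [natPart_spec, Ordinal.div_add_mod]

lemma div_omega_mul_add (η : Ordinal) (n : ℕ) : (ω * η + n) / ω = η := by
  rw [Ordinal.mul_add_div _ omega0_ne_zero, Ordinal.div_eq_zero_of_lt (nat_lt_omega0 n), add_zero]

lemma mod_omega_mul_add (η : Ordinal) (n : ℕ) : (ω * η + n) % ω = n := by
  rw [Ordinal.mul_add_mod_self, Ordinal.mod_eq_of_lt (nat_lt_omega0 n)]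

lemma natPart_mul_add (η : Ordinal) (n : ℕ) : natPart (ω * η + n) = n := by
  have := natPart_spec (ω * η + n)
  rw [mod_omega_mul_add] at this
  exact_mod_cast this

lemma mul_add_nat_lt (η : Ordinal) (n : ℕ) : ω * η + n < ω * (η + 1) := by
  rw [mul_add_one]
  exact add_lt_add_right (nat_lt_omega0 n) _

lemma mul_add_nat_lt_mul {η η' : Ordinal} (h : η < η') (n : ℕ) : ω * η + n < ω * η' := by
  refine (mul_add_nat_lt η n).trans_le ?_
  rw [Ordinal.add_one_eq_succ]
  exact mul_le_mul_right (Order.succ_le_of_lt h) _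

lemma ordEven_mul_add_iff (η : Ordinal) (n : ℕ) : OrdEven (ω * η + n) ↔ Even n := by
  constructor
  · rintro ⟨l, m, hl, hξ⟩
    have hm : (2 * (m : Ordinal)) = ((2 * m : ℕ) : Ordinal) := by
      rw [Ordinal.natCast_mul, Nat.cast_ofNat]
    have hdvd : ω ∣ l := by
      rcases hl with rfl | hl
      · exact dvd_zero _
      · exact Ordinal.isSuccPrelimit_iff_omega0_dvd.mp hl.isSuccPrelimit
    obtain ⟨d, rfl⟩ := hdvd
    rw [hm] at hξ
    have := congrArg (fun x => x % ω) hξ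
    simp only [Ordinal.mul_add_mod_self, Ordinal.mod_eq_of_lt (Ordinal.nat_lt_omega0 _)] at this
    have hn : n = 2 * m := by exact_mod_cast this
    exact ⟨m, by omega⟩
  · rintro ⟨m, rfl⟩
    have hm : ((m + m : ℕ) : Ordinal) = 2 * (m : Ordinal) := by
      rw [show m + m = 2 * m from by omega, Ordinal.natCast_mul, Nat.cast_ofNat]
    rcases eq_or_ne η 0 with rfl | hη
    · exact ⟨0, m, Or.inl rfl, by rw [mul_zero, zero_add, zero_add, hm]⟩
    · exact ⟨ω * η, m,
        Or.inr (Ordinal.isSuccLimit_mul_left Ordinal.isSuccLimit_omega0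
          (pos_iff_ne_zero.mpr hη)), by rw [hm]⟩

/-- index translation for the first simulated game -/
def g1 (m : ℕ) : ℕ := if m % 2 = 0 then m / 2 else 4 * (m / 2) + 1

/-- index translation for the second simulated game -/
def g2 (m : ℕ) : ℕ := if m % 2 = 0 then m / 2 else 4 * (m / 2) + 3

lemma g1_lt {m k : ℕ} (h : m < 2 * k + 1) : g1 m < 4 * k + 1 := by
  unfold g1; split <;> omega

lemma g2_lt {m k : ℕ} (h : m < 2 * k + 1) : g2 m < 4 * k + 3 := by
  unfold g2; split <;> omega

lemma g1_even (n : ℕ) : g1 (2 * n) = n := by unfold g1; split <;> omega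

lemma g2_even (n : ℕ) : g2 (2 * n) = n := by unfold g2; split <;> omega

lemma g1_odd {m : ℕ} (h : m % 2 = 1) : g1 m = 4 * (m / 2) + 1 := by
  unfold g1; split <;> omega

lemma g2_odd {m : ℕ} (h : m % 2 = 1) : g2 m = 4 * (m / 2) + 3 := by
  unfold g2; split <;> omega

/-- The position in the real game corresponding to position `ζ` of the simulated game. -/
noncomputable def simIdx (g : ℕ → ℕ) (ζ : Ordinal) : Ordinal :=
  ω * (ζ / ω) + g (natPart ζ)

lemma simIdx_mul_add (g : ℕ → ℕ) (η : Ordinal) (n : ℕ) :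
    simIdx g (ω * η + n) = ω * η + g n := by
  rw [simIdx, div_omega_mul_add, natPart_mul_add]

lemma simIdx_lt (g : ℕ → ℕ) {η ζ : Ordinal} {k c : ℕ}
    (hg : ∀ m, m < 2 * k + 1 → g m < c)
    (hζ : ζ < ω * η + ((2 * k + 1 : ℕ) : Ordinal)) :
    simIdx g ζ < ω * η + (c : Ordinal) := by
  have hd : ζ / ω ≤ η := by
    have := Ordinal.div_le_left hζ.le ω
    rwa [div_omega_mul_add] at this
  rcases lt_or_eq_of_le hd with hlt | heq
  · exact lt_of_lt_of_le (mul_add_nat_lt_mul hlt _) le_self_add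
  · have hζ' := natPart_decomp ζ
    rw [heq] at hζ'
    have hnp : natPart ζ < 2 * k + 1 := by
      have h2 : ω * η + (natPart ζ : Ordinal) < ω * η + ((2 * k + 1 : ℕ) : Ordinal) := by
        rw [← hζ']; exact hζ
      have := (add_lt_add_iff_left (ω * η)).mp h2
      exact_mod_cast this
    rw [simIdx, heq]
    exact add_lt_add_right (by exact_mod_cast hg _ hnp) _

/-- Extend a position (defined below `ξ`) to all ordinals by a junk value. -/
noncomputable def extendPos (ξ : Ordinal) (pos : Set.Iio ξ → Real') : Ordinal → Real' :=
  fun ζ => if h : ζ < ξ then pos ⟨ζ, h⟩ else fun _ => 0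

/-- The strategy for Player II combining winning strategies for two games:
on moves `ω·η + (4k+1)` it simulates `F₁`, on moves `ω·η + (4k+3)` it simulates `F₂`. -/
noncomputable def combine (F₁ F₂ : StratII) : StratII := fun ξ pos =>
  if natPart ξ % 4 = 1 then
    F₁ (ω * (ξ / ω) + ((2 * (natPart ξ / 4) + 1 : ℕ) : Ordinal))
      (fun ζ => extendPos ξ pos (simIdx g1 ζ.1))
  else
    F₂ (ω * (ξ / ω) + ((2 * (natPart ξ / 4) + 1 : ℕ) : Ordinal))
      (fun ζ => extendPos ξ pos (simIdx g2 ζ.1))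

lemma runSeq_sim (α : Ordinal) (g : ℕ → ℕ) (hg : ∀ n, g (2 * n) = n) (p : Ordinal → Real') :
    runSeq α (fun ζ => p (simIdx g ζ)) = runSeq α p := by
  funext η'
  ext y
  simp only [runSeq, Set.mem_setOf_eq]
  constructor
  · rintro ⟨ξ, hξ, rfl⟩
    refine ⟨simIdx g ξ, ?_, rfl⟩
    have h1 : ξ / ω < 1 + η'.1 := by rwa [Ordinal.div_lt omega0_ne_zero]
    exact mul_add_nat_lt_mul h1 _
  · rintro ⟨ξ, hξ, rfl⟩
    refine ⟨ω * (ξ / ω) + ((2 * natPart ξ : ℕ) : Ordinal), ?_, ?_⟩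
    · have h1 : ξ / ω < 1 + η'.1 := by rwa [Ordinal.div_lt omega0_ne_zero]
      exact mul_add_nat_lt_mul h1 _
    · rw [simIdx_mul_add, hg, ← natPart_decomp]

open scoped Classical in
/-- A run following an arbitrary strategy for Player II. -/
noncomputable def runOf (F : StratII) : Ordinal → Real' :=
  Ordinal.lt_wf.fix (fun ξ ih =>
    if OrdEven ξ then (fun _ => 0) else F ξ (fun ζ => ih ζ.1 ζ.2))

open scoped Classical in
lemma runOf_follows (α : Ordinal) (F : StratII) : Follows α F (runOf F) := by
  intro ξ _ hodd
  conv_lhs => rw [runOf, WellFounded.fix_eq]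
  rw [if_neg hodd]
  rfl


open scoped Classical in
lemma follows_sim1 (α : Ordinal) (F₁ F₂ : StratII) (p : Ordinal → Real')
    (hp : Follows α (combine F₁ F₂) p) :
    Follows α F₁ (fun ζ => p (simIdx g1 ζ)) := by
  intro ζ hζ hodd
  have hdec := natPart_decomp ζ
  set η := ζ / ω with hη
  set m := natPart ζ with hm
  have hmodd : m % 2 = 1 := by
    by_contra h
    exact hodd (by rw [hdec]; exact (ordEven_mul_add_iff η m).mpr (Nat.even_iff.mpr (by omega)))
  set k := m / 2 with hk
  have hζeq : ζ = ω * η + ((2 * k + 1 : ℕ) : Ordinal) := by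
    rw [hdec]
    congr 1
    have hmk : m = 2 * k + 1 := by omega
    exact_mod_cast hmk
  have hωα : (ω : Ordinal) ^ (1 + α) = ω * ω ^ α := by
    rw [opow_add, opow_one]
  have hη' : η < ω ^ α := by
    rw [hη, Ordinal.div_lt omega0_ne_zero, ← hωα]; exact hζ
  set ξ := ω * η + ((4 * k + 1 : ℕ) : Ordinal) with hξdef
  have hξlt : ξ < ω ^ (1 + α) := by rw [hωα]; exact mul_add_nat_lt_mul hη' _
  have hξodd : ¬ OrdEven ξ := by
    rw [hξdef, ordEven_mul_add_iff]
    intro h; rw [Nat.even_iff] at h; omega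
  have key := hp ξ hξlt hξodd
  simp only [combine] at key
  rw [natPart_mul_add, div_omega_mul_add] at key
  rw [if_pos (by omega : (4 * k + 1) % 4 = 1),
    (by omega : (4 * k + 1) / 4 = k)] at key
  rw [← hζeq] at key
  have hsim : simIdx g1 ζ = ξ := by
    rw [hdec, simIdx_mul_add, g1_odd hmodd, ← hk]
  have hfun : (fun ζ' : Set.Iio ζ => extendPos ξ (fun z => p z.1) (simIdx g1 ζ'.1))
      = (fun ζ' : Set.Iio ζ => p (simIdx g1 ζ'.1)) := by
    funext ζ'
    have hbound : simIdx g1 ζ'.1 < ξ := by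
      rw [hξdef]
      exact simIdx_lt g1 (fun m hm => g1_lt hm) (hζeq ▸ ζ'.2)
    simp only [extendPos, dif_pos hbound]
  show p (simIdx g1 ζ) = F₁ ζ (fun ζ' => p (simIdx g1 ζ'.1))
  rw [hsim, key, hfun]

open scoped Classical in
lemma follows_sim2 (α : Ordinal) (F₁ F₂ : StratII) (p : Ordinal → Real')
    (hp : Follows α (combine F₁ F₂) p) :
    Follows α F₂ (fun ζ => p (simIdx g2 ζ)) := by
  intro ζ hζ hodd
  have hdec := natPart_decomp ζ
  set η := ζ / ω with hη
  set m := natPart ζ with hm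
  have hmodd : m % 2 = 1 := by
    by_contra h
    exact hodd (by rw [hdec]; exact (ordEven_mul_add_iff η m).mpr (Nat.even_iff.mpr (by omega)))
  set k := m / 2 with hk
  have hζeq : ζ = ω * η + ((2 * k + 1 : ℕ) : Ordinal) := by
    rw [hdec]
    congr 1
    have hmk : m = 2 * k + 1 := by omega
    exact_mod_cast hmk
  have hωα : (ω : Ordinal) ^ (1 + α) = ω * ω ^ α := by
    rw [opow_add, opow_one]
  have hη' : η < ω ^ α := by
    rw [hη, Ordinal.div_lt omega0_ne_zero, ← hωα]; exact hζ
  set ξ := ω * η + ((4 * k + 3 : ℕ) : Ordinal) with hξdef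
  have hξlt : ξ < ω ^ (1 + α) := by rw [hωα]; exact mul_add_nat_lt_mul hη' _
  have hξodd : ¬ OrdEven ξ := by
    rw [hξdef, ordEven_mul_add_iff]
    intro h; rw [Nat.even_iff] at h; omega
  have key := hp ξ hξlt hξodd
  simp only [combine] at key
  rw [natPart_mul_add, div_omega_mul_add] at key
  rw [if_neg (by omega : ¬ (4 * k + 3) % 4 = 1),
    (by omega : (4 * k + 3) / 4 = k)] at key
  rw [← hζeq] at key
  have hsim : simIdx g2 ζ = ξ := by
    rw [hdec, simIdx_mul_add, g2_odd hmodd, ← hk]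
  have hfun : (fun ζ' : Set.Iio ζ => extendPos ξ (fun z => p z.1) (simIdx g2 ζ'.1))
      = (fun ζ' : Set.Iio ζ => p (simIdx g2 ζ'.1)) := by
    funext ζ'
    have hbound : simIdx g2 ζ'.1 < ξ := by
      rw [hξdef]
      exact simIdx_lt g2 (fun m hm => g2_lt hm) (hζeq ▸ ζ'.2)
    simp only [extendPos, dif_pos hbound]
  show p (simIdx g2 ζ) = F₂ ζ (fun ζ' => p (simIdx g2 ζ'.1))
  rw [hsim, key, hfun]

end Aux

open Ordinal in
/-- For `1 ≤ α < ω₁`, the `α`-Solovay filter is a proper filter on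
`[℘_{ω₁}(ℝ)]^{ω^α}`: it contains the full set, does not contain `∅`, and is closed
under supersets (within the full set) and finite intersections. -/
theorem stmt5 (α : Ordinal) (h1 : 1 ≤ α) (h2 : α < ω₁) :
    FullSeqSet α ∈ SolovayFilter α ∧
    ∅ ∉ SolovayFilter α ∧
    (∀ Z Z' : Set (OrdSeq α), Z ∈ SolovayFilter α → Z ⊆ Z' → Z' ⊆ FullSeqSet α →
      Z' ∈ SolovayFilter α) ∧
    (∀ Z₁ Z₂ : Set (OrdSeq α), Z₁ ∈ SolovayFilter α → Z₂ ∈ SolovayFilter α →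
      Z₁ ∩ Z₂ ∈ SolovayFilter α) := by
  refine ⟨?_, ?_, ?_, ?_⟩
  · refine ⟨subset_rfl, fun _ _ => (fun _ => 0), ?_⟩
    intro p _ η'
    have hβ : omega0 * (1 + η'.1) < ω₁ := by
      have hωα : omega0 ^ α < ω₁ := opow_lt_omega1' h2
      have h1ω : (1 : Ordinal) < ω₁ := one_lt_omega0.trans omega0_lt_omega_one
      exact mul_lt_omega1' omega0_lt_omega_one (add_lt_omega1' h1ω (η'.2.trans hωα))
    refine ((countable_Iio' hβ).image p).mono ?_
    rintro y ⟨ξ, hξ, rfl⟩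
    exact ⟨ξ, hξ, rfl⟩
  · rintro ⟨-, F, hF⟩
    simpa using hF (runOf F) (runOf_follows α F)
  · rintro Z Z' ⟨-, F, hF⟩ hsub hfull
    exact ⟨hfull, F, fun p hp => hsub (hF p hp)⟩
  · rintro Z₁ Z₂ ⟨h1s, F₁, hF₁⟩ ⟨-, F₂, hF₂⟩
    refine ⟨fun σ hσ => h1s hσ.1, combine F₁ F₂, ?_⟩
    intro p hp
    constructor
    · have := hF₁ _ (follows_sim1 α F₁ F₂ p hp)
      rwa [runSeq_sim α g1 g1_even p] at this
    · have := hF₂ _ (follows_sim2 α F₁ F₂ p hp)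
      rwa [runSeq_sim α g2 g2_even p] at this
end
end
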